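/- Let g : A ⥤ C be a Grothendieck opfibration, let f : A ⥤ B and h : C ⥤ B be functors, and let φ : f ⟶ g ⋙ h be a natural transformation. Then φ exhibits h as a pointwise left Kan extension of f along g if and only if for every category X and every functor c : X ⥤ C, writing P for the strict pullback of g along c (objects: pairs (x, a) with c.obj x = g.obj a; morphisms: pairs (u, v) with c.map u = g.map v modulo object equalities) with projections p : P ⥤ A and q : P ⥤ X, the whiskering of φ with p, as a natural transformation p ⋙ f ⟶ q ⋙ c ⋙ h, exhibits c ⋙ h as a left Kan extension of p ⋙ f along q. -/

import Mathlib

open CategoryTheory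

universe w v v₁ v₂ v₃ v₄ v₅ u u₁ u₂ u₃ u₄ u₅

/-- A morphism `α : e₁ ⟶ e₂` is `p`-cartesian when every `α₁ : e₃ ⟶ e₂` together with a
factorisation `p.map α₁ = β ≫ p.map α` lifts uniquely through `α`. -/
def IsCartesianHom {E : Type u₁} {B : Type u₂} [Category.{v₁} E] [Category.{v₂} B]
    (p : E ⥤ B) {e₁ e₂ : E} (α : e₁ ⟶ e₂) : Prop :=
  ∀ (e₃ : E) (α₁ : e₃ ⟶ e₂) (β : p.obj e₃ ⟶ p.obj e₁),
    p.map α₁ = β ≫ p.map α → ∃! γ : e₃ ⟶ e₁, p.map γ = β ∧ γ ≫ α = α₁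

/-- A functor `p : E ⥤ B` is a Grothendieck fibration when every morphism
`β : b ⟶ p.obj e` admits a `p`-cartesian lift with codomain `e`. -/
def IsGrothendieckFibration {E : Type u₁} {B : Type u₂} [Category.{v₁} E] [Category.{v₂} B]
    (p : E ⥤ B) : Prop :=
  ∀ (e : E) (b : B) (β : b ⟶ p.obj e),
    ∃ (e' : E) (α : e' ⟶ e) (h : b = p.obj e'),
      IsCartesianHom p α ∧ eqToHom h ≫ p.map α = β

/-- A functor is a Grothendieck opfibration when its opposite is a Grothendieck fibration. -/
def IsGrothendieckOpfibration {E : Type u₁} {B : Type u₂} [Category.{v₁} E] [Category.{v₂} B]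
    (p : E ⥤ B) : Prop :=
  IsGrothendieckFibration p.op

section StrictPullback

variable {X : Type u₁} {A : Type u₂} {B : Type u₃}
variable [Category.{v₁} X] [Category.{v₂} A] [Category.{v₃} B]

/-- The strict pullback of `g : X ⥤ B` and `f : A ⥤ B`: objects are pairs with equal images. -/
structure StrictPullback (g : X ⥤ B) (f : A ⥤ B) : Type max u₁ u₂ where
  fst : X
  snd : A
  eq : g.obj fst = f.obj snd

namespace StrictPullback

variable {g : X ⥤ B} {f : A ⥤ B}

/-- Morphisms in the strict pullback: pairs of morphisms with equal images,
modulo the object equalities. -/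
@[ext]
structure Hom (P Q : StrictPullback g f) where
  left : P.fst ⟶ Q.fst
  right : P.snd ⟶ Q.snd
  w : g.map left ≫ eqToHom Q.eq = eqToHom P.eq ≫ f.map right

instance : Category (StrictPullback g f) where
  Hom P Q := Hom P Q
  id P := { left := 𝟙 _, right := 𝟙 _, w := by simp }
  comp u v :=
    { left := u.left ≫ v.left
      right := u.right ≫ v.right
      w := by
        rw [Functor.map_comp, Functor.map_comp, Category.assoc, v.w, ← Category.assoc, u.w,
          Category.assoc] }

end StrictPullback

/-- The projection from a strict pullback to the domain of `g`. -/
def strictPullbackFst (g : X ⥤ B) (f : A ⥤ B) : StrictPullback g f ⥤ X where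
  obj P := P.fst
  map u := u.left

/-- The projection from a strict pullback to the domain of `f`. -/
def strictPullbackSnd (g : X ⥤ B) (f : A ⥤ B) : StrictPullback g f ⥤ A where
  obj P := P.snd
  map u := u.right

end StrictPullback

section Statement9

variable {A : Type u₁} {C : Type u₂} {B : Type u₃}
variable [Category.{v₁} A] [Category.{v₂} C] [Category.{v₃} B]

/-- The canonical natural transformation `p ⋙ g ⟶ q ⋙ c` on the strict pullback of
`g : A ⥤ C` along `c : X ⥤ C` (it is a natural isomorphism of `eqToHom`s). -/
def strictPullbackComparison {X : Type u₄} [Category.{v₄} X] (c : X ⥤ C) (g : A ⥤ C) :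
    strictPullbackSnd c g ⋙ g ⟶ strictPullbackFst c g ⋙ c where
  app P := eqToHom P.eq.symm
  naturality P Q u := by
    have h := u.w
    rw [comp_eqToHom_iff] at h
    dsimp [strictPullbackFst, strictPullbackSnd]
    rw [h]
    simp

/-- The whiskering of `φ : f ⟶ g ⋙ h` with the projection `p` from the strict pullback of
`g` along `c`, viewed as a natural transformation `p ⋙ f ⟶ q ⋙ (c ⋙ h)`. -/
def strictPullbackWhisker {X : Type u₄} [Category.{v₄} X] (c : X ⥤ C)
    (g : A ⥤ C) (f : A ⥤ B) (h : C ⥤ B) (φ : f ⟶ g ⋙ h) :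
    strictPullbackSnd c g ⋙ f ⟶ strictPullbackFst c g ⋙ (c ⋙ h) :=
  Functor.whiskerLeft (strictPullbackSnd c g) φ ≫ Functor.whiskerRight (strictPullbackComparison c g) h

lemma IsGrothendieckOpfibration.lift {A' : Type u₅} {C' : Type u₄}
    [Category.{v₅} A'] [Category.{v₄} C'] {g : A' ⥤ C'}
    (hg : IsGrothendieckOpfibration g) (a : A') (c₀ : C') (v : g.obj a ⟶ c₀) :
    ∃ (a' : A') (α : a ⟶ a') (hh : g.obj a' = c₀),
      g.map α ≫ eqToHom hh = v ∧
      ∀ (a₃ : A') (ζ : a ⟶ a₃) (β : g.obj a' ⟶ g.obj a₃), g.map ζ = g.map α ≫ β →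
        ∃! n : a' ⟶ a₃, g.map n = β ∧ α ≫ n = ζ := by
  obtain ⟨e', α, hEq, hcart, hfac⟩ := hg (Opposite.op a) (Opposite.op c₀) v.op
  refine ⟨e'.unop, α.unop, (congrArg Opposite.unop hEq).symm, ?_, ?_⟩
  · have := congrArg Quiver.Hom.unop hfac
    simpa [eqToHom_unop] using this
  · intro a₃ ζ β hβ
    obtain ⟨γ, ⟨h1, h2⟩, huniq⟩ := hcart (Opposite.op a₃) ζ.op β.op
      (by simpa using congrArg Quiver.Hom.op hβ)
    refine ⟨γ.unop, ⟨by simpa using congrArg Quiver.Hom.unop h1,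
      by simpa using congrArg Quiver.Hom.unop h2⟩, ?_⟩
    intro n ⟨hn1, hn2⟩
    have := huniq n.op ⟨by simpa using congrArg Quiver.Hom.op hn1,
      by simpa using congrArg Quiver.Hom.op hn2⟩
    simpa using congrArg Quiver.Hom.unop this

/-- A one-object, one-morphism category in arbitrary universes. -/
def UnitCat : Type u := PUnit.{u + 1}

instance : Category.{v} UnitCat.{u} where
  Hom _ _ := PUnit.{v + 1}
  id _ := ⟨⟩
  comp _ _ := ⟨⟩

/-- The constant functor from `UnitCat` at an object. -/
def unitConst (c₀ : C) : UnitCat.{u₄} ⥤ C where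
  obj _ := c₀
  map _ := 𝟙 c₀

/-- The comparison functor from the costructured arrow category of the strict pullback
projection to the costructured arrow category of `g`. -/
@[simps]
def strictPullbackCompare {X : Type u₄} [Category.{v₄} X] (c : X ⥤ C) (g : A ⥤ C) (x : X) :
    CostructuredArrow (strictPullbackFst c g) x ⥤ CostructuredArrow g (c.obj x) where
  obj J := CostructuredArrow.mk (eqToHom J.left.eq.symm ≫ c.map J.hom)
  map {J J'} m := CostructuredArrow.homMk m.left.right (by
    have ht : (strictPullbackFst c g).map m.left ≫ J'.hom = J.hom := CostructuredArrow.w m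
    have h2 : g.map m.left.right =
        eqToHom J.left.eq.symm ≫ c.map m.left.left ≫ eqToHom J'.left.eq := by
      have h3 := m.left.w.symm
      rw [eqToHom_comp_iff] at h3
      exact h3
    dsimp [strictPullbackFst] at ht ⊢
    rw [h2]
    simp only [Category.assoc, eqToHom_trans, eqToHom_refl, Category.comp_id, eqToHom_trans_assoc,
      Category.id_comp]
    rw [← c.map_comp, ht])

lemma strictPullbackCompare_final {X : Type u₄} [Category.{v₄} X] {c : X ⥤ C} {g : A ⥤ C}
    (hg : IsGrothendieckOpfibration g) (x : X) :
    (strictPullbackCompare c g x).Final := by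
  constructor
  intro d
  obtain ⟨a₀, α₀, hh₀, hfac₀, hcart₀⟩ := hg.lift d.left (c.obj x) d.hom
  let P₀ : StrictPullback c g := ⟨x, a₀, hh₀.symm⟩
  let J₀ : CostructuredArrow (strictPullbackFst c g) x :=
    CostructuredArrow.mk (S := strictPullbackFst c g) (Y := P₀) (𝟙 x)
  let O₀ : StructuredArrow d (strictPullbackCompare c g x) :=
    StructuredArrow.mk (Y := J₀) (CostructuredArrow.homMk α₀ (by
      dsimp [J₀, P₀, strictPullbackCompare, strictPullbackFst]
      simpa using hfac₀))
  have key : ∀ O : StructuredArrow d (strictPullbackCompare c g x), Zigzag O O₀ := by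
    intro O
    set x' := O.right.left.fst with hx'
    set a' := O.right.left.snd with ha'
    have eq' : c.obj x' = g.obj a' := O.right.left.eq
    set u' := O.right.hom with hu'
    set w' := O.hom.left with hw'
    have hOw : g.map w' ≫ eqToHom eq'.symm ≫ c.map u' = d.hom := by
      have := CostructuredArrow.w O.hom
      dsimp [strictPullbackCompare] at this
      exact this
    obtain ⟨ax, αx, hhx, hfacx, hcartx⟩ :=
      hg.lift d.left (c.obj x') (g.map w' ≫ eqToHom eq'.symm)
    let P₁ : StrictPullback c g := ⟨x', ax, hhx.symm⟩
    let J₁ : CostructuredArrow (strictPullbackFst c g) x :=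
      CostructuredArrow.mk (S := strictPullbackFst c g) (Y := P₁) u'
    let O₁ : StructuredArrow d (strictPullbackCompare c g x) :=
      StructuredArrow.mk (Y := J₁) (CostructuredArrow.homMk αx (by
        dsimp [J₁, P₁, strictPullbackCompare, strictPullbackFst]
        rw [← Category.assoc]
        rw [show g.map αx ≫ eqToHom (Eq.symm (Eq.symm hhx)) = g.map w' ≫ eqToHom eq'.symm from
          hfacx]
        simp; exact hOw))
    -- morphism O₁ ⟶ O
    obtain ⟨n, ⟨hn1, hn2⟩, -⟩ := hcartx a' w' (eqToHom hhx ≫ eqToHom eq')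
      (by rw [← Category.assoc, hfacx]; simp; erw [eqToHom_trans, eqToHom_refl, Category.comp_id]; rfl)
    have wpf1 : c.map (𝟙 x') ≫ eqToHom O.right.left.eq = eqToHom P₁.eq ≫ g.map n := by
      rw [hn1, CategoryTheory.Functor.map_id]
      simp [P₁]
    have zag1 : Zag O O₁ := by
      refine Zag.of_inv (StructuredArrow.homMk ?_ ?_)
      · refine CostructuredArrow.homMk ?_ ?_
        · exact ⟨𝟙 x', n, wpf1⟩
        · exact Category.id_comp _
      · apply CostructuredArrow.hom_ext
        dsimp [O₁, strictPullbackCompare]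
        exact hn2
    -- morphism O₁ ⟶ O₀
    obtain ⟨n₂, ⟨hm1, hm2⟩, -⟩ := hcartx a₀ α₀ (eqToHom hhx ≫ c.map u' ≫ eqToHom hh₀.symm)
      (by
        have h1 : g.map α₀ ≫ eqToHom hh₀ = (g.map w' ≫ eqToHom eq'.symm) ≫ c.map u' := by
          rw [hfac₀]; simpa using hOw.symm
        rw [← hfacx] at h1
        rw [comp_eqToHom_iff] at h1
        rw [h1]; simp)
    have wpf2 : c.map u' ≫ eqToHom P₀.eq = eqToHom P₁.eq ≫ g.map n₂ := by
      rw [hm1]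
      simp [P₀, P₁]; rfl
    have zag2 : Zag O₁ O₀ := by
      refine Zag.of_hom (StructuredArrow.homMk ?_ ?_)
      · refine CostructuredArrow.homMk ?_ ?_
        · exact ⟨u', n₂, wpf2⟩
        · exact Category.comp_id _
      · apply CostructuredArrow.hom_ext
        dsimp [O₀, O₁, strictPullbackCompare]
        exact hm2
    exact Relation.ReflTransGen.tail (Relation.ReflTransGen.single zag1) zag2
  haveI : Nonempty (StructuredArrow d (strictPullbackCompare c g x)) := ⟨O₀⟩
  apply zigzag_isConnected
  intro O₁ O₂
  exact (key O₁).trans (zigzag_symmetric.symm _ _ (key O₂))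

/-- The inclusion of the strict fiber over `c₀` into `CostructuredArrow g c₀`. -/
@[simps]
def fiberIncl (g : A ⥤ C) (c₀ : C) :
    StrictPullback (unitConst c₀) g ⥤ CostructuredArrow g c₀ where
  obj P := CostructuredArrow.mk (eqToHom P.eq.symm)
  map {P Q} u := CostructuredArrow.homMk u.right (by
    have h1 : 𝟙 c₀ ≫ eqToHom Q.eq = eqToHom P.eq ≫ g.map u.right := u.w
    rw [Category.id_comp] at h1
    have h2 : g.map u.right = eqToHom P.eq.symm ≫ eqToHom Q.eq := by rw [← eqToHom_comp_iff]; exact h1.symm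
    dsimp
    rw [h2]
    simp [unitConst]; erw [eqToHom_trans, eqToHom_trans])

lemma fiberIncl_final {g : A ⥤ C} (hg : IsGrothendieckOpfibration g) (c₀ : C) :
    (fiberIncl g c₀).Final := by
  constructor
  intro d
  obtain ⟨a₀, α₀, hh₀, hfac₀, hcart₀⟩ := hg.lift d.left c₀ d.hom
  let P₀ : StrictPullback (unitConst c₀) g := ⟨⟨⟩, a₀, hh₀.symm⟩
  let O₀ : StructuredArrow d (fiberIncl g c₀) :=
    StructuredArrow.mk (Y := P₀) (CostructuredArrow.homMk α₀ (by
      dsimp [P₀, fiberIncl]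
      simpa using hfac₀))
  have key : ∀ O : StructuredArrow d (fiberIncl g c₀), Zigzag O₀ O := by
    intro O
    have eq' : c₀ = g.obj O.right.snd := O.right.eq
    have hOw : g.map O.hom.left ≫ eqToHom eq'.symm = d.hom := by
      have := CostructuredArrow.w O.hom
      dsimp [fiberIncl] at this
      exact this
    obtain ⟨n, ⟨hn1, hn2⟩, -⟩ := hcart₀ O.right.snd O.hom.left (eqToHom hh₀ ≫ eqToHom eq')
      (by
        have h1 : g.map α₀ ≫ eqToHom hh₀ = g.map O.hom.left ≫ eqToHom eq'.symm := by
          rw [hfac₀, hOw]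
        rw [comp_eqToHom_iff] at h1
        rw [h1]; simp; erw [eqToHom_trans, eqToHom_refl, Category.comp_id]; rfl)
    have wpf : 𝟙 c₀ ≫ eqToHom O.right.eq = eqToHom P₀.eq ≫ g.map n := by
      rw [Category.id_comp, hn1]
      simp [P₀]; rfl
    refine Relation.ReflTransGen.single (Zag.of_hom (StructuredArrow.homMk ?_ ?_))
    · exact ⟨⟨⟩, n, wpf⟩
    · apply CostructuredArrow.hom_ext
      dsimp [O₀, fiberIncl]
      exact hn2
  haveI : Nonempty (StructuredArrow d (fiberIncl g c₀)) := ⟨O₀⟩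
  apply zigzag_isConnected
  intro O₁ O₂
  exact (zigzag_symmetric.symm _ _ (key O₁)).trans (key O₂)

/-- Let `g : A ⥤ C` be a Grothendieck opfibration.  A natural
transformation `φ : f ⟶ g ⋙ h` exhibits `h` as a pointwise left Kan extension of `f`
along `g` if and only if for every category `X` and functor `c : X ⥤ C`, the whiskering of
`φ` with the projection `p` of the strict pullback of `g` along `c` exhibits `c ⋙ h` as a
left Kan extension of `p ⋙ f` along the projection `q` to `X`. -/
theorem stmt9 (g : A ⥤ C) (f : A ⥤ B) (h : C ⥤ B)
    (hg : IsGrothendieckOpfibration g) (φ : f ⟶ g ⋙ h) :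
    Nonempty (Functor.LeftExtension.mk h φ).IsPointwiseLeftKanExtension ↔
      ∀ (X : Type u₄) [Category.{v₄} X] (c : X ⥤ C),
        (c ⋙ h).IsLeftKanExtension (strictPullbackWhisker c g f h φ) := by
  constructor
  · rintro ⟨hpt⟩ X _ c
    have hptw : (Functor.LeftExtension.mk (c ⋙ h)
        (strictPullbackWhisker c g f h φ)).IsPointwiseLeftKanExtension := by
      intro x
      haveI := strictPullbackCompare_final (c := c) (g := g) hg x
      have h1 : Limits.IsColimit (((Functor.LeftExtension.mk h φ).coconeAt (c.obj x)).whisker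
          (strictPullbackCompare c g x)) :=
        (Functor.Final.isColimitWhiskerEquiv (strictPullbackCompare c g x) _).symm
          (hpt (c.obj x))
      refine Limits.IsColimit.ofIsoColimit h1 (Limits.Cocones.ext (Iso.refl _) ?_)
      intro j
      dsimp [strictPullbackCompare, strictPullbackWhisker, strictPullbackComparison,
        strictPullbackSnd]
      simp
      exact (Category.comp_id _).trans (Category.assoc _ _ _).symm
    exact hptw.isLeftKanExtension
  · intro hR
    refine ⟨fun c₀ => ?_⟩
    haveI := fiberIncl_final (g := g) hg c₀
    haveI hL := hR UnitCat.{u₄} (unitConst c₀)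
    have happ : ∀ (j : StrictPullback (unitConst c₀) g),
        ((((Functor.LeftExtension.mk h φ).coconeAt c₀).whisker (fiberIncl g c₀)).ι).app j =
          (strictPullbackWhisker (unitConst c₀) g f h φ).app j := by
      intro j
      dsimp [fiberIncl, strictPullbackWhisker, strictPullbackComparison, strictPullbackSnd]; rfl
    have hW : Limits.IsColimit (((Functor.LeftExtension.mk h φ).coconeAt c₀).whisker
        (fiberIncl g c₀)) := by
      refine
        { desc := fun s =>
            ((unitConst c₀ ⋙ h).descOfIsLeftKanExtension
              (strictPullbackWhisker (unitConst c₀) g f h φ)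
              ((Functor.const UnitCat.{u₄}).obj s.pt)
              { app := fun j => s.ι.app j
                naturality := fun j j' m => by
                  have := s.ι.naturality m
                  dsimp at this ⊢
                  exact this }).app ⟨⟩
          fac := fun s j => by
            rw [happ j]
            exact Functor.descOfIsLeftKanExtension_fac_app _ _ _ _ j
          uniq := fun s m hm => ?_ }
      have hδ : ({ app := fun _ => m
                   naturality := fun _ _ u => by
                     dsimp
                     simp [unitConst]; erw [Category.id_comp, Category.comp_id] } :
            (unitConst c₀ ⋙ h) ⟶ (Functor.const UnitCat.{u₄}).obj s.pt) =
          (unitConst c₀ ⋙ h).descOfIsLeftKanExtension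
              (strictPullbackWhisker (unitConst c₀) g f h φ)
              ((Functor.const UnitCat.{u₄}).obj s.pt)
              { app := fun j => s.ι.app j
                naturality := fun j j' mm => by
                  have := s.ι.naturality mm
                  dsimp at this ⊢
                  exact this } := by
        refine (unitConst c₀ ⋙ h).hom_ext_of_isLeftKanExtension
          (strictPullbackWhisker (unitConst c₀) g f h φ) _ _ ?_
        rw [Functor.descOfIsLeftKanExtension_fac]
        ext j
        dsimp
        rw [← happ j]
        exact hm j
      exact NatTrans.congr_app hδ ⟨⟩
    exact (Functor.Final.isColimitWhiskerEquiv (fiberIncl g c₀) _) hW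

end Statement9
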